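/- Incremental cyclo-dissipativity of the reactive current controller (Theorem 1, item 3): let (θ̄, ω̄, V̄) satisfy V̄ ∈ ℝⁿ_{>0} and ω̄ = ω⁰·1 for some ω⁰ ∈ ℝ, put P̄ := P(θ̄,V̄), Q̄ := Q(θ̄,V̄), let ū_P ∈ ℝⁿ satisfy 0 = −(ω̄ − ω*) − K_P(P̄ − P*) + ū_P, and set ū_Q := [V̄]⁻¹ Q̄. Then for every θ ∈ ℝⁿ, ω ∈ ℝⁿ, V ∈ ℝⁿ_{>0} and u_P, u_Q ∈ ℝⁿ, defining g := [V]⁻¹ Q(θ,V) − [V̄]⁻¹ Q̄, the following identity holds: (P(θ,V) − P̄)ᵀ ω + (ω − ω̄)ᵀ K_P⁻¹ (−(ω − ω*) − K_P(P(θ,V) − P*) + u_P) + gᵀ T_Q⁻¹ (−[V]⁻¹ Q(θ,V) + u_Q) = −(ω − ω̄)ᵀ K_P⁻¹ (ω − ω̄) + (ω − ω̄)ᵀ K_P⁻¹ (u_P − ū_P) − gᵀ T_Q⁻¹ g + gᵀ T_Q⁻¹ (u_Q − ū_Q). -/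
import Mathlib


open Real Finset Matrix

/-- `B_ii = b̂_i + ∑_{j ≠ i} B_ij`. -/
noncomputable def Bdiag (n : ℕ) (B : Fin n → Fin n → ℝ) (bhat : Fin n → ℝ) (i : Fin n) : ℝ :=
  bhat i + ∑ j ∈ Finset.univ.erase i, B i j

/-- Active power `P_i(θ,V) = ∑_{j ≠ i} B_ij V_i V_j sin(θ_i − θ_j)`. -/
noncomputable def activeP (n : ℕ) (B : Fin n → Fin n → ℝ) (θ V : Fin n → ℝ) (i : Fin n) : ℝ :=
  ∑ j ∈ Finset.univ.erase i, B i j * V i * V j * Real.sin (θ i - θ j)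

/-- Reactive power `Q_i(θ,V) = B_ii V_i² − ∑_{j ≠ i} B_ij V_i V_j cos(θ_i − θ_j)`. -/
noncomputable def reactiveQ (n : ℕ) (B : Fin n → Fin n → ℝ) (bhat : Fin n → ℝ)
    (θ V : Fin n → ℝ) (i : Fin n) : ℝ :=
  Bdiag n B bhat i * V i ^ 2
    - ∑ j ∈ Finset.univ.erase i, B i j * V i * V j * Real.cos (θ i - θ j)

lemma sum_activeP_eq_zero (n : ℕ) (B : Fin n → Fin n → ℝ)
    (hBsymm : ∀ i j, B i j = B j i) (θ V : Fin n → ℝ) :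
    ∑ i, activeP n B θ V i = 0 := by
  have h : ∑ i, activeP n B θ V i
      = ∑ i, ∑ j, B i j * V i * V j * Real.sin (θ i - θ j) := by
    refine Finset.sum_congr rfl fun i _ => ?_
    unfold activeP
    exact Finset.sum_erase _ (by simp)
  rw [h]
  set F : Fin n → Fin n → ℝ := fun i j => B i j * V i * V j * Real.sin (θ i - θ j) with hF
  have hswap : (∑ i, ∑ j, F i j) = ∑ i, ∑ j, F j i := by
    exact Finset.sum_comm ..
  have hanti : ∀ i j : Fin n, F j i = -F i j := by
    intro i j
    simp only [hF]
    rw [hBsymm j i, show θ j - θ i = -(θ i - θ j) by ring, Real.sin_neg]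
    ring
  have h2 : (∑ i, ∑ j, F i j) = -∑ i, ∑ j, F i j := by
    conv_lhs => rw [hswap]
    conv_lhs => rw [show (∑ i, ∑ j, F j i) = ∑ i, ∑ j, -F i j from
      Finset.sum_congr rfl fun i _ => Finset.sum_congr rfl fun j _ => hanti i j]
    simp only [Finset.sum_neg_distrib]
  linarith

/-- Incremental cyclo-dissipativity of the reactive current controller
(Theorem 1, item 3). -/
theorem reactive_current_incremental_cyclo_dissipativity
    (n : ℕ) (G : SimpleGraph (Fin n)) [DecidableRel G.Adj]
    (hconn : G.Connected)
    (B : Fin n → Fin n → ℝ)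
    (hBsymm : ∀ i j, B i j = B j i)
    (hBpos : ∀ i j, G.Adj i j → 0 < B i j)
    (hBzero : ∀ i j, ¬ G.Adj i j → B i j = 0)
    (bhat : Fin n → ℝ) (hbhat : ∀ i, 0 ≤ bhat i)
    (kP TP TQ : Fin n → ℝ)
    (hkP : ∀ i, 0 < kP i) (hTP : ∀ i, 0 < TP i) (hTQ : ∀ i, 0 < TQ i)
    (ωstar Pstar : Fin n → ℝ)
    (θbar ωbar Vbar : Fin n → ℝ) (ω0 : ℝ)
    (hVbar : ∀ i, 0 < Vbar i)
    (hωbar : ωbar = fun _ => ω0)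
    (uPbar uQbar : Fin n → ℝ)
    (huPbar : ∀ i, 0 = -(ωbar i - ωstar i)
        - kP i * (activeP n B θbar Vbar i - Pstar i) + uPbar i)
    (huQbar : uQbar = fun i => reactiveQ n B bhat θbar Vbar i / Vbar i)
    (θ ω V uP uQ : Fin n → ℝ) (hV : ∀ i, 0 < V i)
    (g : Fin n → ℝ)
    (hg : ∀ i, g i = reactiveQ n B bhat θ V i / V i
        - reactiveQ n B bhat θbar Vbar i / Vbar i) :
    ∑ i, (activeP n B θ V i - activeP n B θbar Vbar i) * ω i
      + ∑ i, (ω i - ωbar i) * (kP i)⁻¹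
          * (-(ω i - ωstar i) - kP i * (activeP n B θ V i - Pstar i) + uP i)
      + ∑ i, g i * (TQ i)⁻¹ * (-(reactiveQ n B bhat θ V i / V i) + uQ i)
    =
    -∑ i, (ω i - ωbar i) * (kP i)⁻¹ * (ω i - ωbar i)
      + ∑ i, (ω i - ωbar i) * (kP i)⁻¹ * (uP i - uPbar i)
      - ∑ i, g i * (TQ i)⁻¹ * g i
      + ∑ i, g i * (TQ i)⁻¹ * (uQ i - uQbar i) := by

  have hs1 := sum_activeP_eq_zero n B hBsymm θ V
  have hs2 := sum_activeP_eq_zero n B hBsymm θbar Vbar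
  have key : ∀ i,
      (activeP n B θ V i - activeP n B θbar Vbar i) * ω i
      + (ω i - ωbar i) * (kP i)⁻¹
          * (-(ω i - ωstar i) - kP i * (activeP n B θ V i - Pstar i) + uP i)
      + g i * (TQ i)⁻¹ * (-(reactiveQ n B bhat θ V i / V i) + uQ i)
    =
      (-((ω i - ωbar i) * (kP i)⁻¹ * (ω i - ωbar i))
      + (ω i - ωbar i) * (kP i)⁻¹ * (uP i - uPbar i)
      - g i * (TQ i)⁻¹ * g i
      + g i * (TQ i)⁻¹ * (uQ i - uQbar i))
      + ω0 * (activeP n B θ V i - activeP n B θbar Vbar i) := by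
    intro i
    have hk := (hkP i).ne'
    have hup : uPbar i = (ωbar i - ωstar i) + kP i * (activeP n B θbar Vbar i - Pstar i) := by
      have := huPbar i; linarith
    have hgq : reactiveQ n B bhat θ V i / V i
        = g i + reactiveQ n B bhat θbar Vbar i / Vbar i := by
      rw [hg i]; ring
    simp only [hωbar] at hup ⊢
    rw [hup, hgq, huQbar]
    field_simp
    ring
  calc ∑ i, (activeP n B θ V i - activeP n B θbar Vbar i) * ω i
      + ∑ i, (ω i - ωbar i) * (kP i)⁻¹
          * (-(ω i - ωstar i) - kP i * (activeP n B θ V i - Pstar i) + uP i)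
      + ∑ i, g i * (TQ i)⁻¹ * (-(reactiveQ n B bhat θ V i / V i) + uQ i)
      = ∑ i, ((-((ω i - ωbar i) * (kP i)⁻¹ * (ω i - ωbar i))
      + (ω i - ωbar i) * (kP i)⁻¹ * (uP i - uPbar i)
      - g i * (TQ i)⁻¹ * g i
      + g i * (TQ i)⁻¹ * (uQ i - uQbar i))
      + ω0 * (activeP n B θ V i - activeP n B θbar Vbar i)) := by
        rw [← Finset.sum_add_distrib, ← Finset.sum_add_distrib]
        exact Finset.sum_congr rfl fun i _ => key i
    _ = -∑ i, (ω i - ωbar i) * (kP i)⁻¹ * (ω i - ωbar i)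
      + ∑ i, (ω i - ωbar i) * (kP i)⁻¹ * (uP i - uPbar i)
      - ∑ i, g i * (TQ i)⁻¹ * g i
      + ∑ i, g i * (TQ i)⁻¹ * (uQ i - uQbar i) := by
        rw [Finset.sum_add_distrib]
        have : ∑ i, ω0 * (activeP n B θ V i - activeP n B θbar Vbar i) = 0 := by
          rw [← Finset.mul_sum, Finset.sum_sub_distrib, hs1, hs2]; ring
        rw [this, add_zero]
        simp only [Finset.sum_add_distrib, Finset.sum_sub_distrib, Finset.sum_neg_distrib]
        try ring
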